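/- Let H be a complex Hilbert space and let P, Q be orthogonal projections on H with ‖P − Q‖ < 1. Set D := P − Q. Then I − D² is a positive invertible operator that commutes with both P and Q, and, denoting by R the unique positive operator with R²(I − D²) = I, the operator U := R·(PQ + (I−P)(I−Q)) is unitary and satisfies U Q = P U. Consequently U maps the range of Q unitarily onto the range of P. -/

import Mathlib

set_option maxHeartbeats 1000000
set_option synthInstance.maxHeartbeats 1000000

open ContinuousLinearMap in
private lemma my_commute_of_proj
    {H : Type*} [NormedAddCommGroup H] [InnerProductSpace ℂ H] [CompleteSpace H]
    (R B : H →L[ℂ] H) (hR : 0 ≤ R) (hB : IsSelfAdjoint B) (hB2 : B * B = B)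
    (hcomm : B * (R * R) = (R * R) * B) : B * R = R * B := by
  set V : H →L[ℂ] H := B + B - 1 with hVdef
  have hV2 : V * V = 1 := by
    simp only [hVdef, add_mul, mul_add, sub_mul, mul_sub, one_mul, mul_one, hB2]
    abel
  have hVsa : IsSelfAdjoint V := (hB.add hB).sub (IsSelfAdjoint.one _)
  have hVRR : V * (R * R) = (R * R) * V := by
    simp only [hVdef, add_mul, mul_add, sub_mul, mul_sub, one_mul, mul_one, hcomm]
  have hS0 : 0 ≤ V * R * V := by
    have := star_left_conjugate_nonneg hR V
    rwa [hVsa.star_eq] at this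
  have hSsq : (V * R * V) * (V * R * V) = R * R := by
    have h1 : (V * R * V) * (V * R * V) = V * (R * (V * V) * R) * V := by noncomm_ring
    rw [h1, hV2, mul_one]
    have h2 : V * (R * R) * V = (R * R) * V * V := by rw [hVRR]
    calc V * (R * R) * V = (R * R) * V * V := h2
    _ = (R * R) * (V * V) := by rw [mul_assoc]
    _ = R * R := by rw [hV2, mul_one]
  have h1 : CFC.sqrt (R * R) = R := CFC.sqrt_unique rfl hR
  have h2 : CFC.sqrt (R * R) = V * R * V := CFC.sqrt_unique hSsq hS0
  have hVRV : V * R * V = R := (h1.symm.trans h2).symm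
  have hVR : V * R = R * V := by
    calc V * R = V * R * (V * V) := by rw [hV2, mul_one]
    _ = (V * R * V) * V := by noncomm_ring
    _ = R * V := by rw [hVRV]
  have h3 : B * R + B * R = R * B + R * B := by
    have h := hVR
    simp only [hVdef, add_mul, mul_add, sub_mul, mul_sub, one_mul, mul_one] at h
    exact sub_left_inj.mp h
  have h4 : (2 : ℂ) • (B * R) = (2 : ℂ) • (R * B) := by
    rw [two_smul, two_smul]; exact h3
  exact smul_right_injective _ (two_ne_zero) h4

/-- Sz.-Nagy / Kato construction: if `P`, `Q` are orthogonal projections with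
`‖P - Q‖ < 1`, then `I - (P-Q)²` is positive, invertible and commutes with `P` and `Q`,
and for `R` the (unique) positive operator with `R²(I - (P-Q)²) = I`, the operator
`U = R (PQ + (I-P)(I-Q))` is unitary and intertwines `Q` with `P`, mapping the range
of `Q` onto the range of `P`. -/
theorem szNagy_intertwiner
    {H : Type*} [NormedAddCommGroup H] [InnerProductSpace ℂ H] [CompleteSpace H]
    (P Q : H →L[ℂ] H)
    (hP : IsSelfAdjoint P) (hP2 : P * P = P)
    (hQ : IsSelfAdjoint Q) (hQ2 : Q * Q = Q)
    (hPQ : ‖P - Q‖ < 1) :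
    ((1 : H →L[ℂ] H) - (P - Q) * (P - Q)).IsPositive ∧
    IsUnit ((1 : H →L[ℂ] H) - (P - Q) * (P - Q)) ∧
    Commute ((1 : H →L[ℂ] H) - (P - Q) * (P - Q)) P ∧
    Commute ((1 : H →L[ℂ] H) - (P - Q) * (P - Q)) Q ∧
    (∃ R : H →L[ℂ] H, R.IsPositive ∧
      R * R * ((1 : H →L[ℂ] H) - (P - Q) * (P - Q)) = 1) ∧
    ∀ R : H →L[ℂ] H, R.IsPositive →
      R * R * ((1 : H →L[ℂ] H) - (P - Q) * (P - Q)) = 1 →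
      (R * (P * Q + (1 - P) * (1 - Q))) ∈ unitary (H →L[ℂ] H) ∧
      (R * (P * Q + (1 - P) * (1 - Q))) * Q = P * (R * (P * Q + (1 - P) * (1 - Q))) ∧
      (⇑(R * (P * Q + (1 - P) * (1 - Q)))) '' Set.range (⇑Q) = Set.range (⇑P) := by
  have hP2' : ∀ X : H →L[ℂ] H, P * (P * X) = P * X := fun X => by rw [← mul_assoc, hP2]
  have hQ2' : ∀ X : H →L[ℂ] H, Q * (Q * X) = Q * X := fun X => by rw [← mul_assoc, hQ2]
  set D : H →L[ℂ] H := P - Q with hDdef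
  set T : H →L[ℂ] H := 1 - D * D with hTdef
  have hD : IsSelfAdjoint D := hP.sub hQ
  have hDD : IsSelfAdjoint (D * D) := by
    rw [IsSelfAdjoint, star_mul, hD.star_eq]
  have hTsa : IsSelfAdjoint T := (IsSelfAdjoint.one _).sub hDD
  -- positivity
  have hTpos : T.IsPositive := by
    refine ⟨hTsa.isSymmetric, fun x => ?_⟩
    have hx : T x = x - D (D x) := by
      simp [hTdef, ContinuousLinearMap.sub_apply, ContinuousLinearMap.mul_apply]
    have hsym := hD.isSymmetric
    have h1 : (inner ℂ (D (D x)) x : ℂ) = inner ℂ (D x) (D x) := hsym (D x) x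
    rw [ContinuousLinearMap.reApplyInnerSelf_apply, hx, inner_sub_left, map_sub, h1]
    rw [inner_self_eq_norm_sq (𝕜 := ℂ), inner_self_eq_norm_sq (𝕜 := ℂ)]
    have hDx : ‖D x‖ ≤ ‖D‖ * ‖x‖ := D.le_opNorm x
    have hD1 : ‖D‖ ≤ 1 := le_of_lt hPQ
    have h0 : (0:ℝ) ≤ ‖D x‖ := norm_nonneg _
    have h0' : (0:ℝ) ≤ ‖x‖ := norm_nonneg _
    have h0'' : (0:ℝ) ≤ ‖D‖ := norm_nonneg _
    have h5 : ‖D x‖^2 ≤ ‖D‖^2 * ‖x‖^2 := by nlinarith [mul_self_le_mul_self h0 hDx]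
    have h6 : ‖D‖^2 ≤ 1 := by nlinarith
    nlinarith [h5, h6, sq_nonneg ‖x‖]
  -- invertibility
  have hTunit : IsUnit T := by
    have hnorm : ‖D * D‖ < 1 := by
      calc ‖D * D‖ ≤ ‖D‖ * ‖D‖ := norm_mul_le _ _
      _ < 1 := by nlinarith [norm_nonneg D]
    exact (Units.oneSub (D * D) hnorm).isUnit
  -- commutation with P and Q
  have hDDe : D * D = P - P * Q - Q * P + Q := by
    have : D * D = P * P - P * Q - Q * P + Q * Q := by rw [hDdef]; noncomm_ring
    rw [hP2, hQ2] at this; exact this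
  have hTP : Commute T P := by
    show T * P = P * T
    rw [hTdef, hDDe]
    simp only [mul_add, add_mul, mul_sub, sub_mul, mul_one, one_mul, mul_assoc, hP2, hQ2,
      hP2', hQ2']
    abel
  have hTQ : Commute T Q := by
    show T * Q = Q * T
    rw [hTdef, hDDe]
    simp only [mul_add, add_mul, mul_sub, sub_mul, mul_one, one_mul, mul_assoc, hP2, hQ2,
      hP2', hQ2']
    abel
  obtain ⟨u, hu⟩ := hTunit
  have huinv_mul : (↑u⁻¹ : H →L[ℂ] H) * T = 1 := by rw [← hu]; exact u.inv_mul
  have hmul_uinv : T * (↑u⁻¹ : H →L[ℂ] H) = 1 := by rw [← hu]; exact u.mul_inv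
  have hTnonneg : 0 ≤ T := T.nonneg_iff_isPositive.mpr hTpos
  have huinv_sa : IsSelfAdjoint (↑u⁻¹ : H →L[ℂ] H) := by
    have h2 : star (↑u⁻¹ : H →L[ℂ] H) * T = 1 := by
      have := congrArg star hmul_uinv
      rwa [star_mul, hTsa.star_eq, star_one] at this
    calc star (↑u⁻¹ : H →L[ℂ] H) = star (↑u⁻¹ : H →L[ℂ] H) * (T * ↑u⁻¹) := by
          rw [hmul_uinv, mul_one]
    _ = (star (↑u⁻¹ : H →L[ℂ] H) * T) * ↑u⁻¹ := by rw [mul_assoc]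
    _ = ↑u⁻¹ := by rw [h2, one_mul]
  have huinv_nonneg : 0 ≤ (↑u⁻¹ : H →L[ℂ] H) := by
    have h := star_left_conjugate_nonneg hTnonneg (↑u⁻¹ : H →L[ℂ] H)
    rwa [huinv_sa.star_eq, mul_assoc, hmul_uinv, mul_one] at h
  -- existence
  have hexist : ∃ R : H →L[ℂ] H, R.IsPositive ∧ R * R * T = 1 := by
    refine ⟨CFC.sqrt (↑u⁻¹ : H →L[ℂ] H), ?_, ?_⟩
    · exact (ContinuousLinearMap.nonneg_iff_isPositive _).mp (CFC.sqrt_nonneg _)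
    · have hsq : CFC.sqrt (↑u⁻¹ : H →L[ℂ] H) * CFC.sqrt (↑u⁻¹ : H →L[ℂ] H) = ↑u⁻¹ := by
        have := CFC.sq_sqrt (↑u⁻¹ : H →L[ℂ] H) huinv_nonneg
        rwa [sq] at this
      rw [hsq, huinv_mul]
  refine ⟨hTpos, ⟨u, hu⟩, hTP, hTQ, hexist, ?_⟩
  intro R hRpos hR1
  have hR0 : 0 ≤ R := R.nonneg_iff_isPositive.mpr hRpos
  have hRsa : IsSelfAdjoint R := hRpos.isSelfAdjoint
  have hRR : R * R = (↑u⁻¹ : H →L[ℂ] H) := by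
    calc R * R = (R * R) * (T * ↑u⁻¹) := by rw [hmul_uinv, mul_one]
    _ = (R * R * T) * ↑u⁻¹ := by noncomm_ring
    _ = ↑u⁻¹ := by rw [hR1, one_mul]
  -- P commutes with R
  have hPuinv : P * (↑u⁻¹ : H →L[ℂ] H) = ↑u⁻¹ * P := by
    have h : Commute P (↑u : H →L[ℂ] H) := by rw [hu]; exact hTP.symm
    exact h.units_inv_right
  have hPR : P * R = R * P := by
    refine my_commute_of_proj R P hR0 hP hP2 ?_
    rw [hRR]; exact hPuinv
  set A : H →L[ℂ] H := P * Q + (1 - P) * (1 - Q) with hAdef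
  have hAstar : star A = Q * P + (1 - Q) * (1 - P) := by
    simp [hAdef, star_mul, star_sub, star_one, hP.star_eq, hQ.star_eq]
  -- A * star A = T and star A * A = T
  have hAAs : A * star A = T := by
    rw [hAstar, hAdef, hTdef, hDDe]
    simp only [mul_add, add_mul, mul_sub, sub_mul, mul_one, one_mul, mul_assoc, hP2, hQ2,
      hP2', hQ2']
    abel
  have hAsA : star A * A = T := by
    rw [hAstar, hAdef, hTdef, hDDe]
    simp only [mul_add, add_mul, mul_sub, sub_mul, mul_one, one_mul, mul_assoc, hP2, hQ2,
      hP2', hQ2']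
    abel
  -- T (hence u⁻¹) commutes with A
  have hTA : Commute T A := by
    exact (hTP.mul_right hTQ).add_right
      (((Commute.one_right T).sub_right hTP).mul_right ((Commute.one_right T).sub_right hTQ))
  have hAuinv : A * (↑u⁻¹ : H →L[ℂ] H) = ↑u⁻¹ * A := by
    have h : Commute A (↑u : H →L[ℂ] H) := by rw [hu]; exact hTA.symm
    exact h.units_inv_right
  -- R commutes with T
  have hRT : R * T = T * R := by
    have h : Commute R (↑u⁻¹ : H →L[ℂ] H) := by rw [← hRR]; exact (Commute.refl R).mul_right rfl
    have h2 : Commute R (↑u⁻¹⁻¹ : (H →L[ℂ] H)ˣ).1 := h.units_inv_right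
    rw [inv_inv, hu] at h2
    exact h2
  set U : H →L[ℂ] H := R * A with hUdef
  have hUstar : star U = star A * R := by rw [hUdef, star_mul, hRsa.star_eq]
  have hUU : U * star U = 1 := by
    calc U * star U = R * (A * star A) * R := by rw [hUdef, hUstar]; noncomm_ring
    _ = R * T * R := by rw [hAAs]
    _ = T * R * R := by rw [hRT]
    _ = T * (R * R) := by rw [mul_assoc]
    _ = 1 := by rw [hRR, hmul_uinv]
  have hsUU : star U * U = 1 := by
    calc star U * U = star A * (R * R) * A := by rw [hUdef, hUstar]; noncomm_ring
    _ = star A * (↑u⁻¹ * A) := by rw [hRR, mul_assoc]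
    _ = star A * (A * ↑u⁻¹) := by rw [hAuinv]
    _ = (star A * A) * ↑u⁻¹ := by rw [mul_assoc]
    _ = 1 := by rw [hAsA, hmul_uinv]
  have hUmem : U ∈ unitary (H →L[ℂ] H) := Unitary.mem_iff.mpr ⟨hsUU, hUU⟩
  -- intertwining
  have hAQ : A * Q = P * Q := by
    rw [hAdef]
    simp only [mul_add, add_mul, mul_sub, sub_mul, mul_one, one_mul, mul_assoc, hP2, hQ2,
      hP2', hQ2']
    abel
  have hPA : P * A = P * Q := by
    rw [hAdef]
    simp only [mul_add, add_mul, mul_sub, sub_mul, mul_one, one_mul, mul_assoc, hP2, hQ2,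
      hP2', hQ2']
    abel
  have hinter : U * Q = P * U := by
    calc U * Q = R * (A * Q) := by rw [hUdef, mul_assoc]
    _ = R * (P * Q) := by rw [hAQ]
    _ = R * (P * A) := by rw [hPA]
    _ = (R * P) * A := by rw [mul_assoc]
    _ = (P * R) * A := by rw [hPR]
    _ = P * U := by rw [hUdef, mul_assoc]
  refine ⟨hUmem, hinter, ?_⟩
  have hsurj : Function.Surjective ⇑U := fun y =>
    ⟨star U y, by rw [← ContinuousLinearMap.mul_apply, hUU, ContinuousLinearMap.one_apply]⟩
  calc ⇑U '' Set.range ⇑Q = Set.range (⇑U ∘ ⇑Q) := (Set.range_comp _ _).symm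
  _ = Set.range ⇑(U * Q) := congrArg Set.range rfl
  _ = Set.range ⇑(P * U) := by rw [hinter]
  _ = Set.range (⇑P ∘ ⇑U) := congrArg Set.range rfl
  _ = ⇑P '' Set.range ⇑U := Set.range_comp _ _
  _ = ⇑P '' Set.univ := by rw [hsurj.range_eq]
  _ = Set.range ⇑P := Set.image_univ
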